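/- Let K be a field of characteristic zero and n ≥ 4. For every derivation D of T(n) there exist M ∈ T(n) and scalars λ_1,…,λ_{n−1}, c_1,…,c_{n−1} ∈ K such that the derivation D' = D − ad(M) satisfies: D'(N_{12}) = λ_1 N_{12} + c_1 N_{2n}; D'(N_{j(j+1)}) = λ_j N_{j(j+1)} + c_j N_{1n} for every j with 2 ≤ j ≤ n−2; D'(N_{(n−1)n}) = λ_{n−1} N_{(n−1)n} + c_{n−1} N_{1(n−1)}; and D'(N_{ik}) = (Σ_{p=i}^{k−1} λ_p) N_{ik} for every pair i < k with k − i ≥ 2. -/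

import Mathlib

open Matrix

attribute [local instance 100] LieRing.ofAssociativeRing

/-- The Lie algebra `T(n)` of strictly upper triangular `n × n` matrices over `K`. -/
def strictUpper (n : ℕ) (K : Type*) [Field K] :
    LieSubalgebra K (Matrix (Fin n) (Fin n) K) where
  carrier := {M | ∀ i j : Fin n, j ≤ i → M i j = 0}
  add_mem' := by
    intro a b ha hb i j hij
    simp [Matrix.add_apply, ha i j hij, hb i j hij]
  zero_mem' := by intro i j hij; simp
  smul_mem' := by
    intro c a ha i j hij
    simp [Matrix.smul_apply, ha i j hij]
  lie_mem' := by
    intro a b ha hb i j hij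
    have hmul : ∀ x y : Matrix (Fin n) (Fin n) K,
        (∀ i j : Fin n, j ≤ i → x i j = 0) → (∀ i j : Fin n, j ≤ i → y i j = 0) →
        (x * y) i j = 0 := by
      intro x y hx hy
      rw [Matrix.mul_apply]
      apply Finset.sum_eq_zero
      intro s _
      rcases le_or_gt s i with h | h
      · rw [hx i s h, zero_mul]
      · rw [hy s j (hij.trans h.le), mul_zero]
    rw [Ring.lie_def, Matrix.sub_apply, hmul a b ha hb, hmul b a hb ha, sub_zero]

/-- The standard basis element `N_{ik}` (with `i < k`) of `T(n)`. -/
def stdN {n : ℕ} {K : Type*} [Field K] {i k : Fin n} (h : i < k) :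
    strictUpper n K :=
  ⟨Matrix.single i k 1, by
    intro a b hba
    simp only [Matrix.single, Matrix.of_apply, ite_eq_right_iff, one_ne_zero]
    rintro ⟨rfl, rfl⟩
    exact absurd h (not_lt.mpr hba)⟩

/-- The basis element `N_{ik}` of `T(n)`, indexed by natural numbers (`0`-based). -/
def natN (n : ℕ) (K : Type*) [Field K] (i k : ℕ) (h1 : i < k) (h2 : k < n) :
    strictUpper n K :=
  stdN (i := ⟨i, h1.trans h2⟩) (k := ⟨k, h2⟩) (Fin.mk_lt_mk.mpr h1)

open Matrix

section AuxEntry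
variable {n : ℕ} {K : Type*} [Field K]

lemma mulStd_entry (A : Matrix (Fin n) (Fin n) K) (a b u v : Fin n) :
    (A * single a b (1:K)) u v = if v = b then A u a else 0 := by
  rw [Matrix.mul_apply]
  simp only [single, Matrix.of_apply]
  rcases eq_or_ne v b with rfl | hv
  · rw [Finset.sum_eq_single a]
    · simp
    · intro c _ hc; simp [Ne.symm hc]
    · simp
  · simp only [if_neg hv]
    apply Finset.sum_eq_zero
    intro c _
    simp [Ne.symm hv]

lemma stdMul_entry (A : Matrix (Fin n) (Fin n) K) (a b u v : Fin n) :
    (single a b (1:K) * A) u v = if u = a then A b v else 0 := by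
  rw [Matrix.mul_apply]
  simp only [single, Matrix.of_apply]
  rcases eq_or_ne u a with rfl | hu
  · rw [Finset.sum_eq_single b]
    · simp
    · intro c _ hc; simp [Ne.symm hc]
    · simp
  · simp only [if_neg hu]
    apply Finset.sum_eq_zero
    intro c _
    simp [Ne.symm hu]

lemma su_entry_zero (X : strictUpper n K) {u v : Fin n} (h : v ≤ u) :
    (X : Matrix (Fin n) (Fin n) K) u v = 0 := X.2 u v h

lemma su_bracket_coe (X Y : strictUpper n K) :
    ((⁅X, Y⁆ : strictUpper n K) : Matrix (Fin n) (Fin n) K)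
      = (X : Matrix (Fin n) (Fin n) K) * Y - (Y : Matrix (Fin n) (Fin n) K) * X := by
  rw [LieSubalgebra.coe_bracket, Ring.lie_def]

lemma natN_coe (i k : ℕ) (h1 : i < k) (h2 : k < n) :
    ((natN n K i k h1 h2 : strictUpper n K) : Matrix (Fin n) (Fin n) K)
      = single ⟨i, h1.trans h2⟩ ⟨k, h2⟩ (1:K) := rfl

/-- entry of `⁅X, N_{j,j+1}⁆` -/
lemma lie_gen_entry (X : strictUpper n K) (j : ℕ) (hj : j + 1 < n) (u v : Fin n) :
    ((⁅X, natN n K j (j+1) (Nat.lt_add_one j) hj⁆ : strictUpper n K) : Matrix (Fin n) (Fin n) K) u v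
      = (if v = (⟨j+1, hj⟩ : Fin n) then (X : Matrix (Fin n) (Fin n) K) u ⟨j, by omega⟩ else 0)
        - (if u = (⟨j, by omega⟩ : Fin n) then (X : Matrix (Fin n) (Fin n) K) ⟨j+1, hj⟩ v else 0) := by
  rw [su_bracket_coe, Matrix.sub_apply, natN_coe, mulStd_entry, stdMul_entry]

lemma su_ext {X Y : strictUpper n K}
    (h : ∀ u v : Fin n, (X : Matrix (Fin n) (Fin n) K) u v = (Y : Matrix (Fin n) (Fin n) K) u v) :
    X = Y := Subtype.ext (by ext u v; exact h u v)

end AuxEntry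
section Constraints
variable {n : ℕ} {K : Type*} [Field K]

/-- The generator `e_m = N_{m,m+1}`. -/
abbrev eG (n : ℕ) (K : Type*) [Field K] (m : ℕ) (hm : m + 1 < n) : strictUpper n K :=
  natN n K m (m+1) (Nat.lt_add_one m) hm

/-- Matrix of `D e_m`. -/
abbrev DE (D : LieDerivation K (strictUpper n K) (strictUpper n K)) (m : ℕ) (hm : m + 1 < n) :
    Matrix (Fin n) (Fin n) K :=
  ((D (eG n K m hm) : strictUpper n K) : Matrix (Fin n) (Fin n) K)

lemma DE_zero (D : LieDerivation K (strictUpper n K) (strictUpper n K)) (m : ℕ)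
    (hm : m + 1 < n) {u v : Fin n} (h : v ≤ u) : DE D m hm u v = 0 :=
  su_entry_zero _ h

/-- entry of `⁅X, N_{ik}⁆`. -/
lemma lie_N_entry (X : strictUpper n K) (i k : ℕ) (h1 : i < k) (h2 : k < n) (u v : Fin n) :
    ((⁅X, natN n K i k h1 h2⁆ : strictUpper n K) : Matrix (Fin n) (Fin n) K) u v
      = (if v = (⟨k, h2⟩ : Fin n) then (X : Matrix (Fin n) (Fin n) K) u ⟨i, by omega⟩ else 0)
        - (if u = (⟨i, by omega⟩ : Fin n) then (X : Matrix (Fin n) (Fin n) K) ⟨k, h2⟩ v else 0) := by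
  rw [su_bracket_coe, Matrix.sub_apply, natN_coe, mulStd_entry, stdMul_entry]

/-- entry of `⁅N_{ik}, X⁆`. -/
lemma N_lie_entry (X : strictUpper n K) (i k : ℕ) (h1 : i < k) (h2 : k < n) (u v : Fin n) :
    ((⁅natN n K i k h1 h2, X⁆ : strictUpper n K) : Matrix (Fin n) (Fin n) K) u v
      = (if u = (⟨i, by omega⟩ : Fin n) then (X : Matrix (Fin n) (Fin n) K) ⟨k, h2⟩ v else 0)
        - (if v = (⟨k, h2⟩ : Fin n) then (X : Matrix (Fin n) (Fin n) K) u ⟨i, by omega⟩ else 0) := by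
  rw [su_bracket_coe, Matrix.sub_apply, natN_coe, mulStd_entry, stdMul_entry]

lemma natN_bracket (i j k : ℕ) (h1 : i < j) (h2 : j < k) (hk : k < n) :
    ⁅natN n K i j h1 (h2.trans hk), natN n K j k h2 hk⁆ = natN n K i k (h1.trans h2) hk := by
  apply Subtype.ext
  rw [su_bracket_coe, natN_coe, natN_coe, natN_coe]
  have hne : (⟨k, hk⟩ : Fin n) ≠ ⟨i, h1.trans (h2.trans hk)⟩ := by
    simp only [ne_eq, Fin.mk.injEq]; omega
  rw [Matrix.single_mul_single_same, Matrix.single_mul_single_of_ne (h := hne), one_mul,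
    sub_zero]

lemma natN_bracket_zero (i j k l : ℕ) (hij : i < j) (hj : j < n) (hkl : k < l) (hl : l < n)
    (h1 : j ≠ k) (h2 : l ≠ i) :
    ⁅natN n K i j hij hj, natN n K k l hkl hl⁆ = 0 := by
  apply Subtype.ext
  rw [su_bracket_coe, natN_coe, natN_coe]
  rw [Matrix.single_mul_single_of_ne (h := Fin.ne_of_val_ne h1),
    Matrix.single_mul_single_of_ne (h := Fin.ne_of_val_ne h2), sub_zero]
  rfl

variable (D : LieDerivation K (strictUpper n K) (strictUpper n K))

/-- The pointwise constraint coming from `⁅e_i, e_j⁆ = 0`, `j ≥ i + 2`. -/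
lemma K1 (i j : ℕ) (hi : i + 1 < n) (hj : j + 1 < n) (hij : i + 2 ≤ j) (u v : Fin n) :
    (if u = (⟨i, by omega⟩ : Fin n) then DE D j hj ⟨i+1, by omega⟩ v else 0)
    - (if v = (⟨i+1, by omega⟩ : Fin n) then DE D j hj u ⟨i, by omega⟩ else 0)
    + ((if v = (⟨j+1, hj⟩ : Fin n) then DE D i hi u ⟨j, by omega⟩ else 0)
    - (if u = (⟨j, by omega⟩ : Fin n) then DE D i hi ⟨j+1, hj⟩ v else 0)) = 0 := by
  have h0 : ⁅eG n K i hi, eG n K j hj⁆ = (0 : strictUpper n K) :=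
    natN_bracket_zero i (i+1) j (j+1) (by omega) hi (by omega) hj (by omega) (by omega)
  have h1 := D.apply_lie_eq_add (eG n K i hi) (eG n K j hj)
  rw [h0, map_zero] at h1
  have h2 := congrArg (fun X : strictUpper n K => (X : Matrix (Fin n) (Fin n) K) u v) h1.symm
  simp only [AddMemClass.coe_add, Matrix.add_apply, ZeroMemClass.coe_zero, Matrix.zero_apply] at h2
  rw [show eG n K i hi = natN n K i (i+1) (by omega) hi from rfl,
    show eG n K j hj = natN n K j (j+1) (by omega) hj from rfl] at h2
  rw [N_lie_entry, lie_N_entry] at h2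
  exact h2

end Constraints
section Cors
variable {n : ℕ} {K : Type*} [Field K]
variable (D : LieDerivation K (strictUpper n K) (strictUpper n K))

lemma cA (i j : ℕ) (hi : i + 1 < n) (hj : j + 1 < n) (hij : i + 2 ≤ j)
    (u : Fin n) (v : Fin n) (hu1 : u.val ≠ i) (hu2 : u.val ≠ j) (hv : v.val = j) :
    DE D i hi u v = 0 := by
  rw [show v = ⟨j, Nat.lt_of_succ_lt hj⟩ from Fin.ext hv]
  have h := K1 D i j hi hj hij u ⟨j+1, hj⟩
  have e3 : ¬(j + 1 = i + 1) := by omega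
  simp only [Fin.ext_iff, Fin.val_mk, hu1, hu2, e3, if_false, if_true, ite_true, ite_false,
    sub_zero, zero_sub, zero_add, add_zero, neg_eq_zero, ite_self] at h
  exact h

lemma cB (i j : ℕ) (hi : i + 1 < n) (hj : j + 1 < n) (hij : i + 2 ≤ j) :
    DE D i hi ⟨i, by omega⟩ ⟨j, by omega⟩ + DE D j hj ⟨i+1, by omega⟩ ⟨j+1, hj⟩ = 0 := by
  have h := K1 D i j hi hj hij ⟨i, by omega⟩ ⟨j+1, hj⟩
  have e1 : ¬(j + 1 = i + 1) := by omega
  have e2 : ¬(i = j) := by omega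
  simp only [Fin.ext_iff, Fin.val_mk, e1, e2, if_false, if_true, ite_true, ite_false,
    sub_zero, zero_sub, zero_add, add_zero, ite_self] at h
  linear_combination h

lemma cC (i j : ℕ) (hi : i + 1 < n) (hj : j + 1 < n) (hij : i + 2 ≤ j)
    (u v : Fin n) (hu : u.val = j + 1) (hv1 : v.val ≠ j + 1) (hv2 : v.val ≠ i + 1) :
    DE D i hi u v = 0 := by
  rw [show u = ⟨j+1, hj⟩ from Fin.ext hu]
  have h := K1 D i j hi hj hij ⟨j, by omega⟩ v
  have e1 : ¬(j = i) := by omega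
  simp only [Fin.ext_iff, Fin.val_mk, e1, hv1, hv2, if_false, if_true, ite_true, ite_false,
    sub_zero, zero_sub, zero_add, add_zero, neg_eq_zero, ite_self] at h
  exact h

lemma cD (i j : ℕ) (hi : i + 1 < n) (hj : j + 1 < n) (hij : i + 2 ≤ j)
    (u v : Fin n) (hu : u.val = i + 1) (hv : v.val ≠ j + 1) :
    DE D j hj u v = 0 := by
  rw [show u = ⟨i+1, by omega⟩ from Fin.ext hu]
  have h := K1 D i j hi hj hij ⟨i, by omega⟩ v
  have e1 : ¬(i = j) := by omega
  have hz : DE D j hj ⟨i, by omega⟩ ⟨i, by omega⟩ = 0 := DE_zero D j hj (le_refl _)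
  simp only [Fin.ext_iff, Fin.val_mk, e1, hv, hz, if_false, if_true, ite_true, ite_false,
    sub_zero, zero_sub, zero_add, add_zero, neg_eq_zero, ite_self] at h
  exact h

lemma cE (i j : ℕ) (hi : i + 1 < n) (hj : j + 1 < n) (hij : i + 2 ≤ j)
    (u v : Fin n) (hu1 : u.val ≠ i) (hu2 : u.val ≠ j) (hv : v.val = i) :
    DE D j hj u v = 0 := by
  rw [show v = ⟨i, by omega⟩ from Fin.ext hv]
  have h := K1 D i j hi hj hij u ⟨i+1, by omega⟩
  have e1 : ¬(i + 1 = j + 1) := by omega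
  simp only [Fin.ext_iff, Fin.val_mk, hu1, hu2, e1, if_false, if_true, ite_true, ite_false,
    sub_zero, zero_sub, zero_add, add_zero, neg_eq_zero, ite_self] at h
  exact h

end Cors
section Serre
variable {n : ℕ} {K : Type*} [Field K] [CharZero K]
variable (D : LieDerivation K (strictUpper n K) (strictUpper n K))

lemma serre_core (m : ℕ) (hm : m + 2 < n) :
    (0 : strictUpper n K)
      = ⁅natN n K m (m+1) (Nat.lt_add_one m) (by omega),
          ⁅natN n K m (m+1) (Nat.lt_add_one m) (by omega), D (natN n K (m+1) (m+2) (by omega) hm)⁆⁆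
        + ⁅natN n K m (m+1) (Nat.lt_add_one m) (by omega),
          ⁅D (natN n K m (m+1) (Nat.lt_add_one m) (by omega)), natN n K (m+1) (m+2) (by omega) hm⁆⁆
        + ⁅D (natN n K m (m+1) (Nat.lt_add_one m) (by omega)), natN n K m (m+2) (by omega) hm⁆ := by
  have hg := natN_bracket (n := n) (K := K) m (m+1) (m+2) (by omega) (by omega) hm
  have h0 : ⁅natN n K m (m+1) (by omega) (by omega), natN n K m (m+2) (by omega) hm⁆
      = (0 : strictUpper n K) :=
    natN_bracket_zero _ _ _ _ _ _ _ _ (by omega) (by omega)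
  have hDg := D.apply_lie_eq_add (natN n K m (m+1) (by omega) (by omega))
    (natN n K (m+1) (m+2) (by omega) hm)
  rw [hg] at hDg
  have h1 := D.apply_lie_eq_add (natN n K m (m+1) (by omega) (by omega))
    (natN n K m (m+2) (by omega) hm)
  rw [h0, map_zero, hDg, lie_add] at h1
  exact h1

lemma serre_core2 (m : ℕ) (hm : m + 2 < n) :
    (0 : strictUpper n K)
      = ⁅natN n K (m+1) (m+2) (by omega) hm,
          ⁅natN n K m (m+1) (Nat.lt_add_one m) (by omega), D (natN n K (m+1) (m+2) (by omega) hm)⁆⁆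
        + ⁅natN n K (m+1) (m+2) (by omega) hm,
          ⁅D (natN n K m (m+1) (Nat.lt_add_one m) (by omega)), natN n K (m+1) (m+2) (by omega) hm⁆⁆
        + ⁅D (natN n K (m+1) (m+2) (by omega) hm), natN n K m (m+2) (by omega) hm⁆ := by
  have hg := natN_bracket (n := n) (K := K) m (m+1) (m+2) (by omega) (by omega) hm
  have h0 : ⁅natN n K (m+1) (m+2) (by omega) hm, natN n K m (m+2) (by omega) hm⁆
      = (0 : strictUpper n K) :=
    natN_bracket_zero _ _ _ _ _ _ _ _ (by omega) (by omega)
  have hDg := D.apply_lie_eq_add (natN n K m (m+1) (by omega) (by omega))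
    (natN n K (m+1) (m+2) (by omega) hm)
  rw [hg] at hDg
  have h1 := D.apply_lie_eq_add (natN n K (m+1) (m+2) (by omega) hm)
    (natN n K m (m+2) (by omega) hm)
  rw [h0, map_zero, hDg, lie_add] at h1
  exact h1

lemma cS1a (m : ℕ) (hm : m + 2 < n) (u : Fin n) (hu : u.val ≠ m) :
    DE D m (by omega) u ⟨m, by omega⟩ = 0 := by
  have h2 := congrArg
    (fun X : strictUpper n K => (X : Matrix (Fin n) (Fin n) K) u ⟨m+2, hm⟩)
    (serre_core D m hm)
  have e1 : ¬(m + 2 = m + 1) := by omega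
  have e2 : ¬(m + 2 = m) := by omega
  have e3 : ¬(m = m + 1) := by omega
  have e4 : ¬(m = m + 2) := by omega
  have e5 : ¬(m + 1 = m) := by omega
  have e6 : ¬(m + 1 = m + 2) := by omega
  simp only [AddMemClass.coe_add, Matrix.add_apply, ZeroMemClass.coe_zero, Matrix.zero_apply,
    N_lie_entry, lie_N_entry, Fin.ext_iff, Fin.val_mk, e1, e2, e3, e4, e5, e6, hu,
    if_false, if_true, ite_true, ite_false, sub_zero, zero_sub, zero_add, add_zero,
    neg_eq_zero, ite_self] at h2
  exact h2.symm

lemma cS1b (m : ℕ) (hm : m + 2 < n) (v : Fin n) :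
    DE D m (by omega) ⟨m+2, hm⟩ v = 0 := by
  have h2 := congrArg
    (fun X : strictUpper n K => (X : Matrix (Fin n) (Fin n) K) ⟨m, by omega⟩ v)
    (serre_core D m hm)
  have e1 : ¬(m + 2 = m + 1) := by omega
  have e2 : ¬(m + 2 = m) := by omega
  have e3 : ¬(m = m + 1) := by omega
  have e4 : ¬(m = m + 2) := by omega
  have e5 : ¬(m + 1 = m) := by omega
  have e6 : ¬(m + 1 = m + 2) := by omega
  have z1 : ((D (natN n K (m+1) (m+2) (by omega) hm) : strictUpper n K) :
      Matrix (Fin n) (Fin n) K) ⟨m+1, by omega⟩ ⟨m, by omega⟩ = 0 :=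
    su_entry_zero _ (by simp [Fin.mk_le_mk])
  have z2 : ((D (natN n K m (m+1) (by omega) (by omega)) : strictUpper n K) :
      Matrix (Fin n) (Fin n) K) ⟨m+1, by omega⟩ ⟨m+1, by omega⟩ = 0 :=
    su_entry_zero _ (le_refl _)
  have z3 : ((D (natN n K m (m+1) (by omega) (by omega)) : strictUpper n K) :
      Matrix (Fin n) (Fin n) K) ⟨m, by omega⟩ ⟨m, by omega⟩ = 0 :=
    su_entry_zero _ (le_refl _)
  simp only [AddMemClass.coe_add, Matrix.add_apply, ZeroMemClass.coe_zero, Matrix.zero_apply,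
    N_lie_entry, lie_N_entry, Fin.ext_iff, Fin.val_mk, e1, e2, e3, e4, e5, e6, z1, z2, z3,
    if_false, if_true, ite_true, ite_false, sub_zero, zero_sub, zero_add, add_zero,
    neg_eq_zero, ite_self] at h2
  have h3 : (2 : K) * DE D m (by omega) ⟨m+2, hm⟩ v = 0 := by
    linear_combination h2
  exact (mul_eq_zero.mp h3).resolve_left (by norm_num)

lemma cS2a (m : ℕ) (hm : m + 2 < n) (u : Fin n) (hu : u.val ≠ m) :
    DE D (m+1) hm u ⟨m, by omega⟩ = 0 := by
  have h2 := congrArg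
    (fun X : strictUpper n K => (X : Matrix (Fin n) (Fin n) K) u ⟨m+2, hm⟩)
    (serre_core2 D m hm)
  have e1 : ¬(m + 2 = m + 1) := by omega
  have e2 : ¬(m + 2 = m) := by omega
  have e3 : ¬(m = m + 1) := by omega
  have e4 : ¬(m = m + 2) := by omega
  have e5 : ¬(m + 1 = m) := by omega
  have e6 : ¬(m + 1 = m + 2) := by omega
  have z1 : ((D (natN n K m (m+1) (by omega) (by omega)) : strictUpper n K) :
      Matrix (Fin n) (Fin n) K) ⟨m+2, hm⟩ ⟨m+1, by omega⟩ = 0 :=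
    su_entry_zero _ (by simp [Fin.mk_le_mk])
  have z2 : ((D (natN n K (m+1) (m+2) (by omega) hm) : strictUpper n K) :
      Matrix (Fin n) (Fin n) K) ⟨m+1, by omega⟩ ⟨m+1, by omega⟩ = 0 :=
    su_entry_zero _ (le_refl _)
  simp only [AddMemClass.coe_add, Matrix.add_apply, ZeroMemClass.coe_zero, Matrix.zero_apply,
    N_lie_entry, lie_N_entry, Fin.ext_iff, Fin.val_mk, e1, e2, e3, e4, e5, e6, hu, z1, z2,
    if_false, if_true, ite_true, ite_false, sub_zero, zero_sub, zero_add, add_zero,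
    neg_eq_zero, ite_self] at h2
  have h3 : (2 : K) * DE D (m+1) hm u ⟨m, by omega⟩ = 0 := by
    linear_combination - h2
  exact (mul_eq_zero.mp h3).resolve_left (by norm_num)

lemma cS2b (m : ℕ) (hm : m + 2 < n) (v : Fin n) :
    DE D (m+1) hm ⟨m+2, hm⟩ v = 0 := by
  have h2 := congrArg
    (fun X : strictUpper n K => (X : Matrix (Fin n) (Fin n) K) ⟨m, by omega⟩ v)
    (serre_core2 D m hm)
  have e1 : ¬(m + 2 = m + 1) := by omega
  have e2 : ¬(m + 2 = m) := by omega
  have e3 : ¬(m = m + 1) := by omega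
  have e4 : ¬(m = m + 2) := by omega
  have e5 : ¬(m + 1 = m) := by omega
  have e6 : ¬(m + 1 = m + 2) := by omega
  have z1 : ((D (natN n K (m+1) (m+2) (by omega) hm) : strictUpper n K) :
      Matrix (Fin n) (Fin n) K) ⟨m+1, by omega⟩ ⟨m+1, by omega⟩ = 0 :=
    su_entry_zero _ (le_refl _)
  have z2 : ((D (natN n K (m+1) (m+2) (by omega) hm) : strictUpper n K) :
      Matrix (Fin n) (Fin n) K) ⟨m, by omega⟩ ⟨m, by omega⟩ = 0 :=
    su_entry_zero _ (le_refl _)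
  simp only [AddMemClass.coe_add, Matrix.add_apply, ZeroMemClass.coe_zero, Matrix.zero_apply,
    N_lie_entry, lie_N_entry, Fin.ext_iff, Fin.val_mk, e1, e2, e3, e4, e5, e6, z1, z2,
    if_false, if_true, ite_true, ite_false, sub_zero, zero_sub, zero_add, add_zero,
    neg_eq_zero, ite_self] at h2
  simpa using h2.symm

end Serre
section Normal
variable {n : ℕ} {K : Type*} [Field K] [CharZero K]

def spcRow (m : ℕ) : ℕ := if m = 0 then 1 else 0
def spcCol (n m : ℕ) : ℕ := if m = 0 then n - 1 else if m + 3 ≤ n then n - 1 else n - 2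

lemma spc_bnd {n : ℕ} (hn : 4 ≤ n) (m : ℕ) : spcRow m < spcCol n m ∧ spcCol n m < n := by
  unfold spcRow spcCol; split_ifs <;> omega

variable (D : LieDerivation K (strictUpper n K) (strictUpper n K))

noncomputable def aEnt (D : LieDerivation K (strictUpper n K) (strictUpper n K))
    (m p q : ℕ) : K :=
  if h : m + 1 < n ∧ p < n ∧ q < n then DE D m h.1 ⟨p, h.2.1⟩ ⟨q, h.2.2⟩ else 0

lemma aEnt_eq (m p q : ℕ) (h1 : m + 1 < n) (h2 : p < n) (h3 : q < n) :
    aEnt D m p q = DE D m h1 ⟨p, h2⟩ ⟨q, h3⟩ := by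
  rw [aEnt, dif_pos ⟨h1, h2, h3⟩]

lemma aEnt_entry (m : ℕ) (hm : m + 1 < n) (u v : Fin n) :
    aEnt D m u.val v.val = DE D m hm u v :=
  aEnt_eq D m u.val v.val hm u.isLt v.isLt

noncomputable def Mmat : strictUpper n K :=
  ⟨Matrix.of fun p q : Fin n =>
    if p.val < q.val then
      (if q.val = n - 1 then - aEnt D (p.val - 1) (p.val - 1) (n - 1)
       else aEnt D q.val p.val (q.val + 1))
    else 0, by
    intro i j hij
    have h : ¬ (i.val < j.val) := not_lt.mpr hij
    simp only [Matrix.of_apply]; rw [if_neg h]⟩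

lemma Mmat_entry (u v : Fin n) :
    ((Mmat D : strictUpper n K) : Matrix (Fin n) (Fin n) K) u v
      = if u.val < v.val then
          (if v.val = n - 1 then - aEnt D (u.val - 1) (u.val - 1) (n - 1)
           else aEnt D v.val u.val (v.val + 1))
        else 0 := rfl

noncomputable def lamF : ℕ → K := fun m => aEnt D m m (m + 1)
noncomputable def ccF : ℕ → K := fun m => aEnt D m (spcRow m) (spcCol n m)

noncomputable def spcN (hn : 4 ≤ n) (m : ℕ) : strictUpper n K :=
  natN n K (spcRow m) (spcCol n m) (spc_bnd hn m).1 (spc_bnd hn m).2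

/-- wrapper: column `j-1` of `D e_j` vanishes away from the diagonal row -/
lemma cJ1 (j : ℕ) (hj : j + 1 < n) (u v : Fin n) (hu : u.val + 1 ≠ j) (hv : v.val + 1 = j) :
    DE D j hj u v = 0 := by
  obtain ⟨m, rfl⟩ : ∃ m, j = m + 1 := ⟨v.val, hv.symm⟩
  rw [show v = ⟨m, by omega⟩ from Fin.ext (by simp only [Fin.val_mk]; omega)]
  exact cS2a D m hj u (by omega)

/-- wrapper: row `j+1` of `D e_j` vanishes (for `j ≥ 1`) -/
lemma cJ4 (j : ℕ) (hj1 : 1 ≤ j) (hj : j + 1 < n) (u v : Fin n) (hu : u.val = j + 1) :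
    DE D j hj u v = 0 := by
  obtain ⟨m, rfl⟩ : ∃ m, j = m + 1 := ⟨j - 1, by omega⟩
  rw [show u = ⟨m + 2, by omega⟩ from Fin.ext (by simp only [Fin.val_mk]; omega)]
  exact cS2b D m hj v

end Normal
section GenLemma
variable {n : ℕ} {K : Type*} [Field K] [CharZero K]
variable (D : LieDerivation K (strictUpper n K) (strictUpper n K))

lemma su_smul_coe (c : K) (x : strictUpper n K) :
    ((c • x : strictUpper n K) : Matrix (Fin n) (Fin n) K)
      = c • (x : Matrix (Fin n) (Fin n) K) := rfl

lemma spcN_coe (hn : 4 ≤ n) (m : ℕ) :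
    ((spcN (K := K) hn m : strictUpper n K) : Matrix (Fin n) (Fin n) K)
      = single ⟨spcRow m, (spc_bnd hn m).1.trans (spc_bnd hn m).2⟩
          ⟨spcCol n m, (spc_bnd hn m).2⟩ (1 : K) := rfl

lemma GEN (hn : 4 ≤ n) (m : ℕ) (hm : m + 1 < n) :
    D (natN n K m (m+1) (Nat.lt_add_one m) hm)
      = ⁅Mmat D, natN n K m (m+1) (Nat.lt_add_one m) hm⁆
        + lamF D m • natN n K m (m+1) (Nat.lt_add_one m) hm
        + ccF D m • spcN (K := K) hn m := by
  have hr := spc_bnd (n := n) hn m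
  apply su_ext
  intro u v
  by_cases hvu : v ≤ u
  · rw [su_entry_zero _ hvu, su_entry_zero _ hvu]
  have hUV : u.val < v.val := by
    have := not_le.mp hvu
    exact this
  have hult := u.isLt
  have hvlt := v.isLt
  simp only [AddMemClass.coe_add, Matrix.add_apply, su_smul_coe, Matrix.smul_apply,
    smul_eq_mul, lie_N_entry, Mmat_entry, natN_coe, spcN_coe, single, Matrix.of_apply,
    Fin.ext_iff, Fin.val_mk]
  have hLHS : ((D (natN n K m (m+1) (by omega) hm) : strictUpper n K) :
      Matrix (Fin n) (Fin n) K) u v = DE D m hm u v := rfl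
  rw [hLHS]
  by_cases hU : u.val = m
  · by_cases hV : v.val = m + 1
    · -- diagonal coefficient
      rw [← aEnt_entry D m hm u v, hU, hV]
      have hspc : ¬(spcRow m = m ∧ spcCol n m = m + 1) := by
        unfold spcRow spcCol; split_ifs <;> omega
      simp only [hU, hV, lt_self_iff_false, if_false, ite_false, if_true, ite_true, and_self,
        hspc, mul_one, mul_zero, sub_zero, zero_sub, zero_add, add_zero, neg_zero, lamF]
    · -- row m, columns ≥ m+2
      have hv2 : m + 2 ≤ v.val := by omega
      rw [← aEnt_entry D m hm u v, hU]
      have hspc : ¬(spcRow m = m ∧ spcCol n m = v.val) := by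
        unfold spcRow; split_ifs <;> omega
      have hlam : ¬(m + 1 = v.val) := by omega
      have hlt : m + 1 < v.val := by omega
      by_cases hvn : v.val = n - 1
      · have hf1 : ¬(m + 1 = n - 1) := by omega
        have hf2 : m + 1 < n - 1 := by omega
        have hspc2 : ¬(spcRow m = m ∧ spcCol n m = n - 1) := by
          unfold spcRow; split_ifs <;> omega
        simp only [hU, hvn, hf1, hf2, hspc2, Nat.add_sub_cancel, lt_self_iff_false, if_false,
          ite_false, if_true, ite_true, and_false, false_and, true_and, and_true, mul_zero,
          sub_zero, zero_sub, zero_add, add_zero, ite_self]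
        ring
      · have hcb := cB D m v.val hm (by omega) (by omega)
        rw [← aEnt_eq D m m v.val hm (by omega) (by omega),
          ← aEnt_eq D v.val (m+1) (v.val+1) (by omega) (by omega) (by omega)] at hcb
        simp only [hU, hV, hvn, hspc, hlam, hlt, lt_self_iff_false,
          if_false, ite_false, if_true, ite_true, and_false, false_and, mul_zero, sub_zero,
          zero_sub, zero_add, add_zero]
        linear_combination hcb
  · by_cases hV : v.val = m + 1
    · -- column m+1, rows < m
      have hum : u.val < m := by omega
      have hmn : ¬(m = n - 1) := by omega
      rw [← aEnt_entry D m hm u v, hV]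
      have hspc : ¬(spcRow m = u.val ∧ spcCol n m = m + 1) := by
        unfold spcRow spcCol; split_ifs <;> omega
      have hlam : ¬(m = u.val) := by omega
      simp only [hV, hU, hum, hmn, hspc, hlam, if_false, ite_false, if_true, ite_true,
        and_false, false_and, mul_zero, sub_zero, zero_sub, zero_add, add_zero]
      try ring
    · -- generic position
      by_cases hspc : spcRow m = u.val ∧ spcCol n m = v.val
      · have hL : DE D m hm u v = ccF D m := by
          rw [← aEnt_entry D m hm u v, ← hspc.1, ← hspc.2]; rfl
        rw [hL]
        have hlam : ¬(m = u.val) := by omega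
        simp only [hU, hV, hspc.1, hspc.2, hlam, and_self, if_false, ite_false, if_true,
          ite_true, and_false, false_and, mul_zero, mul_one, sub_zero, zero_sub, zero_add,
          add_zero]
      · have hL : DE D m hm u v = 0 := by
          by_cases h1 : v.val + 2 ≤ m
          · exact cE D v.val m (by omega) hm (by omega) u v (by omega) hU rfl
          by_cases h2 : v.val + 1 = m
          · exact cJ1 D m hm u v (by omega) h2
          by_cases h3 : v.val = m
          · by_cases h4 : m + 2 < n
            · rw [show v = ⟨m, by omega⟩ from Fin.ext h3]
              exact cS1a D m h4 u hU
            · have hu0 : u.val ≠ 0 := by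
                intro h0
                exact hspc ⟨by unfold spcRow; rw [if_neg (by omega)]; omega,
                  by unfold spcCol; rw [if_neg (by omega), if_neg (by omega)]; omega⟩
              exact cD D (u.val - 1) m (by omega) hm (by omega) u v (by omega) (by omega)
          by_cases h5 : v.val + 1 < n
          · exact cA D m v.val hm h5 (by omega) u v hU (by omega) rfl
          by_cases h6 : u.val = 0
          · exact absurd ⟨by unfold spcRow; rw [if_neg (by omega)]; omega,
              by unfold spcCol; rw [if_neg (by omega), if_pos (by omega)]; omega⟩ hspc
          by_cases h7 : u.val < m
          · exact cD D (u.val - 1) m (by omega) hm (by omega) u v (by omega) (by omega)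
          by_cases h8 : u.val = m + 1
          · by_cases h9 : m = 0
            · exact absurd ⟨by unfold spcRow; rw [if_pos h9]; omega,
                by unfold spcCol; rw [if_pos h9]; omega⟩ hspc
            · exact cJ4 D m (by omega) hm u v h8
          by_cases h10 : u.val = m + 2
          · rw [show u = ⟨m+2, by omega⟩ from Fin.ext h10]
            exact cS1b D m (by omega) v
          · exact cC D m (u.val - 1) hm (by omega) (by omega) u v (by omega) (by omega)
              (by omega)
        rw [hL]
        have hlam : ¬(m = u.val) := by omega
        simp only [hU, hV, hspc, hlam, and_false, false_and, if_false, ite_false,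
          mul_zero, sub_zero, zero_sub, zero_add, add_zero, neg_zero]

end GenLemma
section StepC
variable {n : ℕ} {K : Type*} [Field K] [CharZero K]
variable (D : LieDerivation K (strictUpper n K) (strictUpper n K))

lemma natN_congr {i i' k k' : ℕ} (hi : i = i') (hk : k = k')
    (h1 : i < k) (h2 : k < n) (h1' : i' < k') (h2' : k' < n) :
    natN n K i k h1 h2 = natN n K i' k' h1' h2' := by
  subst hi; subst hk; rfl

lemma spcRow_char (m : ℕ) : (m = 0 ∧ spcRow m = 1) ∨ (m ≠ 0 ∧ spcRow m = 0) := by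
  unfold spcRow; split_ifs with h1
  · exact Or.inl ⟨h1, rfl⟩
  · exact Or.inr ⟨h1, rfl⟩

lemma spcCol_char (n m : ℕ) : (m ≠ 0 ∧ ¬(m + 3 ≤ n) ∧ spcCol n m = n - 2)
    ∨ ((m = 0 ∨ m + 3 ≤ n) ∧ spcCol n m = n - 1) := by
  unfold spcCol; split_ifs with h1 h2
  · exact Or.inr ⟨Or.inl h1, rfl⟩
  · exact Or.inr ⟨Or.inr h2, rfl⟩
  · exact Or.inl ⟨h1, h2, rfl⟩

lemma spc_lie_zero (hn : 4 ≤ n) (m i k : ℕ) (hik : i < k) (hk : k < n)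
    (h1 : k ≠ spcRow m) (h2 : spcCol n m ≠ i) :
    ⁅natN n K i k hik hk, spcN (K := K) hn m⁆ = 0 := by
  rw [show spcN (K := K) hn m
      = natN n K (spcRow m) (spcCol n m) (spc_bnd hn m).1 (spc_bnd hn m).2 from rfl]
  exact natN_bracket_zero _ _ _ _ _ _ _ _ h1 h2

lemma stepC (hn : 4 ≤ n) (i : ℕ) :
    ∀ (k : ℕ) (hik : i + 2 ≤ k) (hk : k < n),
      D (natN n K i k (lt_of_lt_of_le (Nat.lt_add_of_pos_right two_pos) hik) hk)
        = ⁅Mmat D, natN n K i k (lt_of_lt_of_le (Nat.lt_add_of_pos_right two_pos) hik) hk⁆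
          + (∑ p ∈ Finset.Ico i k, lamF D p) • natN n K i k (lt_of_lt_of_le (Nat.lt_add_of_pos_right two_pos) hik) hk := by
  intro k
  induction k with
  | zero => intro h _; omega
  | succ k ih =>
    intro hik hk
    by_cases hbase : k = i + 1
    · obtain rfl : k = i + 1 := hbase
      have e1 : i + 1 < n := by omega
      rw [← natN_bracket i (i+1) (i+1+1) (by omega) (by omega) hk,
        D.apply_lie_eq_add, GEN D hn i e1, GEN D hn (i+1) hk]
      have hz1 : ⁅natN n K i (i+1) (by omega) e1, spcN (K := K) hn (i+1)⁆ = 0 :=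
        spc_lie_zero hn (i+1) i (i+1) (by omega) e1
          (by rcases spcRow_char (i+1) with ⟨h1, h2⟩ | ⟨h1, h2⟩ <;> omega)
          (by rcases spcCol_char n (i+1) with ⟨h1, h2, h3⟩ | ⟨h2, h3⟩ <;> omega)
      have hz2 : ⁅spcN (K := K) hn i, natN n K (i+1) (i+1+1) (by omega) hk⁆ = 0 := by
        rw [show spcN (K := K) hn i
            = natN n K (spcRow i) (spcCol n i) (spc_bnd hn i).1 (spc_bnd hn i).2 from rfl]
        exact natN_bracket_zero _ _ _ _ _ _ _ _
          (by rcases spcCol_char n i with ⟨h1, h2, h3⟩ | ⟨h2, h3⟩ <;> omega)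
          (by rcases spcRow_char i with ⟨h1, h2⟩ | ⟨h1, h2⟩ <;> omega)
      rw [lie_add, lie_add, add_lie, add_lie, lie_smul, lie_smul, smul_lie, smul_lie,
        hz1, hz2, smul_zero, smul_zero, add_zero, add_zero]
      conv_rhs => rw [leibniz_lie, Finset.sum_Ico_succ_top (by omega : i ≤ i + 1),
        Finset.sum_Ico_succ_top (by omega : i ≤ i), Finset.Ico_self, Finset.sum_empty]
      module
    · have hik' : i + 2 ≤ k := by omega
      have hkn : k < n := by omega
      rw [← natN_bracket i k (k+1) (by omega) (by omega) hk,
        D.apply_lie_eq_add, ih hik' hkn, GEN D hn k hk]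
      have hz1 : ⁅natN n K i k (by omega) hkn, spcN (K := K) hn k⁆ = 0 :=
        spc_lie_zero hn k i k (by omega) hkn
          (by rcases spcRow_char k with ⟨h1, h2⟩ | ⟨h1, h2⟩ <;> omega)
          (by rcases spcCol_char n k with ⟨h1, h2, h3⟩ | ⟨h2, h3⟩ <;> omega)
      rw [lie_add, lie_add, add_lie, lie_smul, lie_smul, smul_lie, hz1, smul_zero, add_zero]
      conv_rhs => rw [leibniz_lie, Finset.sum_Ico_succ_top (by omega : i ≤ k)]
      module

end StepC

/-- Canonical form of a derivation of $T(n)$ modulo inner derivations: subtracting a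
suitable $\operatorname{ad}(M)$, the derivation acts diagonally on the basis except for
the $n-1$ special off-diagonal parameters $c_1, …, c_{n-1}$.
(Indices here are $0$-based: $N_{ik}$ of the paper is `natN n K (i-1) (k-1)`.) -/
theorem derivation_canonical_form
    (K : Type*) [Field K] [CharZero K] (n : ℕ) (hn : 4 ≤ n)
    (D : LieDerivation K (strictUpper n K) (strictUpper n K)) :
    ∃ (M : strictUpper n K) (lam c : ℕ → K),
      (D (natN n K 0 1 (by omega) (by omega)) =
        ⁅M, natN n K 0 1 (by omega) (by omega)⁆ +
          lam 0 • natN n K 0 1 (by omega) (by omega) +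
          c 0 • natN n K 1 (n - 1) (by omega) (by omega)) ∧
      (∀ (j : ℕ) (hj1 : 1 ≤ j) (hj2 : j ≤ n - 3),
        D (natN n K j (j + 1) (by omega) (by omega)) =
          ⁅M, natN n K j (j + 1) (by omega) (by omega)⁆ +
            lam j • natN n K j (j + 1) (by omega) (by omega) +
            c j • natN n K 0 (n - 1) (by omega) (by omega)) ∧
      (D (natN n K (n - 2) (n - 1) (by omega) (by omega)) =
        ⁅M, natN n K (n - 2) (n - 1) (by omega) (by omega)⁆ +
          lam (n - 2) • natN n K (n - 2) (n - 1) (by omega) (by omega) +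
          c (n - 2) • natN n K 0 (n - 2) (by omega) (by omega)) ∧
      (∀ (i k : ℕ) (hik : i + 2 ≤ k) (hk : k < n),
        D (natN n K i k (by omega) hk) =
          ⁅M, natN n K i k (by omega) hk⁆ +
            (∑ p ∈ Finset.Ico i k, lam p) • natN n K i k (by omega) hk) := by
  refine ⟨Mmat D, lamF D, ccF D, ?_, ?_, ?_, ?_⟩
  · have h := GEN D hn 0 (by omega)
    rw [show spcN (K := K) hn 0 = natN n K 1 (n - 1) (by omega) (by omega) from
      natN_congr (by rcases spcRow_char 0 with ⟨a, b⟩ | ⟨a, b⟩ <;> omega)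
        (by rcases spcCol_char n 0 with ⟨a, b, c⟩ | ⟨b, c⟩ <;> omega)
        (spc_bnd hn 0).1 (spc_bnd hn 0).2 (by omega) (by omega)] at h
    exact h
  · intro j hj1 hj2
    have h := GEN D hn j (by omega)
    rw [show spcN (K := K) hn j = natN n K 0 (n - 1) (by omega) (by omega) from
      natN_congr (by rcases spcRow_char j with ⟨a, b⟩ | ⟨a, b⟩ <;> omega)
        (by rcases spcCol_char n j with ⟨a, b, c⟩ | ⟨b, c⟩ <;> omega)
        (spc_bnd hn j).1 (spc_bnd hn j).2 (by omega) (by omega)] at h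
    exact h
  · have h := GEN D hn (n - 2) (by omega)
    rw [show natN n K (n - 2) (n - 2 + 1) (by omega) (by omega)
        = natN n K (n - 2) (n - 1) (by omega) (by omega) from
      natN_congr rfl (by omega) (by omega) (by omega) (by omega) (by omega)] at h
    rw [show spcN (K := K) hn (n - 2) = natN n K 0 (n - 2) (by omega) (by omega) from
      natN_congr (by rcases spcRow_char (n - 2) with ⟨a, b⟩ | ⟨a, b⟩ <;> omega)
        (by rcases spcCol_char n (n - 2) with ⟨a, b, c⟩ | ⟨b, c⟩ <;> omega)
        (spc_bnd hn (n - 2)).1 (spc_bnd hn (n - 2)).2 (by omega) (by omega)] at h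
    exact h
  · intro i k hik hk
    exact stepC D hn i k hik hk
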